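/- Let a₁, a₂ be integers with 2 ≤ a₁ ≤ a₂ satisfying a₁·a₂ − a₁ − a₂ = gcd(a₁, a₂). Then (a₁, a₂) ∈ {(2,3), (2,4), (3,3)}; in particular a₁·a₂ − a₁ − a₂ = gcd(a₁,a₂) with a₁, a₂ ≥ 2 has exactly the solutions {a₁,a₂} = {2,3}, {2,4}, and {3,3}. -/

import Mathlib

theorem stmt_1 (a₁ a₂ : ℤ) (h1 : 2 ≤ a₁) (h12 : a₁ ≤ a₂)
    (h : a₁ * a₂ - a₁ - a₂ = Int.gcd a₁ a₂) :
    (a₁ = 2 ∧ a₂ = 3) ∨ (a₁ = 2 ∧ a₂ = 4) ∨ (a₁ = 3 ∧ a₂ = 3) := by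
  have hg : (Int.gcd a₁ a₂ : ℤ) ≤ a₁ :=
    Int.le_of_dvd (by omega) (Int.gcd_dvd_left a₁ a₂)
  have ha2 : a₂ ≤ 4 := by nlinarith
  have ha1 : a₁ ≤ 4 := le_trans h12 ha2
  interval_cases a₁ <;> interval_cases a₂ <;> norm_num [Int.gcd] at h <;> norm_num
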